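/- Let f : [a,b] → ℝ be continuously differentiable with f(a) = 0 and 0 < f'(x) < 1 for all x ∈ (a,b). Then for every x ∈ (a,b], ∫_a^x f(t) dt > f(x)^2 / 2. -/

import Mathlib

theorem key_lemma_square (a b : ℝ) (hab : a < b) (f f' : ℝ → ℝ)
    (hfc : ContinuousOn f (Set.Icc a b))
    (hfd : ∀ x ∈ Set.Ioo a b, HasDerivAt f (f' x) x)
    (hf'c : ContinuousOn f' (Set.Icc a b))
    (hfa : f a = 0) (hf' : ∀ x ∈ Set.Ioo a b, 0 < f' x ∧ f' x < 1) :
    ∀ x ∈ Set.Ioc a b, (∫ t in a..x, f t) > f x ^ 2 / 2 := by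
  -- f is strictly monotone on [a,b]
  have hmono : StrictMonoOn f (Set.Icc a b) := by
    apply strictMonoOn_of_deriv_pos (convex_Icc a b) hfc
    intro x hx
    rw [interior_Icc] at hx
    rw [(hfd x hx).deriv]
    exact (hf' x hx).1
  have hfpos : ∀ x ∈ Set.Ioo a b, 0 < f x := by
    intro x hx
    have := hmono (Set.left_mem_Icc.2 hab.le)
      ⟨hx.1.le, hx.2.le⟩ hx.1
    rwa [hfa] at this
  -- integrability
  have hint : IntervalIntegrable f MeasureTheory.volume a b := by
    apply ContinuousOn.intervalIntegrable
    rwa [Set.uIcc_of_le hab.le]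
  set G : ℝ → ℝ := fun x => (∫ t in a..x, f t) - f x ^ 2 / 2 with hG
  have hGc : ContinuousOn G (Set.Icc a b) := by
    apply ContinuousOn.sub
    · have := intervalIntegral.continuousOn_primitive_interval' hint (Set.left_mem_uIcc (a := a) (b := b))
      rwa [Set.uIcc_of_le hab.le] at this
    · exact ((hfc.pow 2).div_const 2)
  have hGd : ∀ x ∈ Set.Ioo a b, HasDerivAt G (f x * (1 - f' x)) x := by
    intro x hx
    have hF : HasDerivAt (fun x => ∫ t in a..x, f t) (f x) x := by
      apply intervalIntegral.integral_hasDerivAt_right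
        (hint.mono_set ?_) ?_ (hfd x hx).continuousAt
      · rw [Set.uIcc_of_le hab.le, Set.uIcc_of_le hx.1.le]
        exact Set.Icc_subset_Icc le_rfl hx.2.le
      · exact ⟨Set.Ioo a b, Ioo_mem_nhds hx.1 hx.2,
          (hfc.mono (Set.Ioo_subset_Icc_self)).aestronglyMeasurable measurableSet_Ioo⟩
    have hsq : HasDerivAt (fun x => f x ^ 2 / 2) (f x * f' x) x := by
      have : HasDerivAt (fun x => f x ^ 2 / 2) (((2:ℕ):ℝ) * f x ^ (2 - 1) * f' x / 2) x :=
        ((hfd x hx).fun_pow 2).div_const 2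
      convert this using 1
      ring
    have : HasDerivAt (fun x => (∫ t in a..x, f t) - f x ^ 2 / 2) (f x - f x * f' x) x :=
      hF.sub hsq
    convert this using 1
    ring
  have hGmono : StrictMonoOn G (Set.Icc a b) := by
    apply strictMonoOn_of_deriv_pos (convex_Icc a b) hGc
    intro x hx
    rw [interior_Icc] at hx
    rw [(hGd x hx).deriv]
    exact mul_pos (hfpos x hx) (by linarith [(hf' x hx).2])
  intro x hx
  have h1 := hGmono (Set.left_mem_Icc.2 hab.le) ⟨hx.1.le, hx.2⟩ hx.1
  have hGa : G a = 0 := by simp [hG, hfa]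
  rw [hGa] at h1
  simp only [hG] at h1
  linarith
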